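/- Let A be a real symmetric n×n matrix that is positive semidefinite on the subspace {x : ∑ᵢ xᵢ = 0}, with A_{ij} ≤ 0 for all i ≠ j and each row sum equal to 0, and suppose the submatrix obtained by deleting the last row and column is positive definite. Then that submatrix is an M-matrix: its inverse has all entries nonnegative. -/

import Mathlib

/-- Algebraic core of the discrete maximum principle: if a symmetric matrix `A`
is positive semidefinite on the mean-zero subspace, has nonpositive off-diagonal
entries and zero row sums, and its leading principal submatrix `B` (obtained by
deleting the last row and column) is positive definite, then `B⁻¹` is entrywise
nonnegative. -/
theorem stiffness_submatrix_M_matrix {n : ℕ}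
    (A : Matrix (Fin (n + 1)) (Fin (n + 1)) ℝ)
    (hsym : A.IsSymm)
    (hpsd : ∀ x : Fin (n + 1) → ℝ, (∑ i, x i) = 0 → 0 ≤ dotProduct x (A.mulVec x))
    (hoff : ∀ i j, i ≠ j → A i j ≤ 0)
    (hrow : ∀ i, (∑ j, A i j) = 0)
    (B : Matrix (Fin n) (Fin n) ℝ)
    (hB : B = A.submatrix Fin.castSucc Fin.castSucc)
    (hBpd : B.PosDef) :
    ∀ i j, 0 ≤ B⁻¹ i j := by
  classical
  intro i j
  have hBdet : IsUnit B.det := isUnit_iff_ne_zero.mpr (ne_of_gt hBpd.det_pos)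
  set x : Fin n → ℝ := B⁻¹.mulVec (Pi.single j 1) with hxdef
  have hxi : x i = B⁻¹ i j := by
    simp [hxdef, Matrix.mulVec, dotProduct]
  have hBx : B.mulVec x = Pi.single j 1 := by
    rw [hxdef, Matrix.mulVec_mulVec, Matrix.mul_nonsing_inv _ hBdet, Matrix.one_mulVec]
  set z : Fin n → ℝ := fun k => min (x k) 0 with hzdef
  have hz0 : ∀ k, z k ≤ 0 := fun k => min_le_right _ _
  have hxz : ∀ k, 0 ≤ x k - z k := by
    intro k
    rcases le_or_gt 0 (x k) with h | h
    · have : z k = 0 := min_eq_right h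
      simp [this, h]
    · have : z k = x k := min_eq_left h.le
      simp [this]
  have hzw : ∀ k, z k * (x k - z k) = 0 := by
    intro k
    rcases le_or_gt 0 (x k) with h | h
    · have : z k = 0 := min_eq_right h
      simp [this]
    · have : z k = x k := min_eq_left h.le
      simp [this]
  have hBoff : ∀ p q : Fin n, p ≠ q → B p q ≤ 0 := by
    intro p q hpq
    rw [hB]
    exact hoff _ _ (fun h => hpq (Fin.castSucc_injective _ h))
  -- second term nonneg
  have h2 : 0 ≤ dotProduct z (B.mulVec (x - z)) := by
    unfold dotProduct Matrix.mulVec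
    apply Finset.sum_nonneg
    intro p _
    rw [dotProduct, Finset.mul_sum]
    apply Finset.sum_nonneg
    intro q _
    rcases eq_or_ne p q with rfl | hpq
    · have : z p * (B p p * ((x - z) p)) = B p p * (z p * (x p - z p)) := by
        simp [Pi.sub_apply]; ring
      rw [this, hzw p, mul_zero]
    · have h1 : B p q * ((x - z) q) ≤ 0 :=
        mul_nonpos_of_nonpos_of_nonneg (hBoff p q hpq) (by simpa using hxz q)
      nlinarith [hz0 p, h1]
  -- first term nonneg (PSD)
  have h1 : 0 ≤ dotProduct z (B.mulVec z) := by
    simpa using hBpd.posSemidef.dotProduct_mulVec_nonneg z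
  have hsplit : dotProduct z (B.mulVec x)
      = dotProduct z (B.mulVec z) + dotProduct z (B.mulVec (x - z)) := by
    rw [← dotProduct_add, ← Matrix.mulVec_add]
    congr 1
    funext k
    simp
  have hzj : dotProduct z (B.mulVec x) = z j := by
    rw [hBx]
    simp [dotProduct, Pi.single_apply, mul_ite]
  by_contra hcon
  push_neg at hcon
  have hxineg : x i < 0 := by rw [hxi]; exact hcon
  have hzi : z i = x i := min_eq_left hxineg.le
  have hzne : z ≠ 0 := by
    intro h
    have := congrFun h i
    rw [hzi] at this
    exact absurd this (ne_of_lt hxineg)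
  have hpos : 0 < dotProduct z (B.mulVec z) := by
    have := hBpd.dotProduct_mulVec_pos hzne
    simpa using this
  have : (0 : ℝ) < z j := by
    rw [← hzj, hsplit]; linarith
  exact absurd this (not_lt.mpr (hz0 j))
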